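/- Let G be a group and χ_m, χ_p : G → ℂˣ group homomorphisms such that χ_p(g) is a real number for every g ∈ G; set χ := χ_m·χ_p (pointwise product). Let Γ : G̃^χ → ℂˣ be a group homomorphism with Γ(1,−1) = −1, where G̃^χ = {(g,z₁) ∈ G × ℂˣ : χ(g) = z₁²}. Then: (i) for every (g,z) ∈ G̃^{χ_m} = {(g,z) : χ_m(g) = z²}, the value (z·z₁⁻¹/|z·z₁⁻¹|)·Γ(g,z₁) is the same for both choices of z₁ ∈ ℂˣ with z₁² = χ(g); (ii) the resulting map Γ' : G̃^{χ_m} → ℂˣ, Γ'(g,z) := (z·z₁⁻¹/|z·z₁⁻¹|)·Γ(g,z₁), is a group homomorphism with Γ'(1,−1) = −1; (iii) for every such (g,z) and z₁, the factor z·z₁⁻¹/|z·z₁⁻¹| is a fourth root of unity; and (iv) if |Γ(x)| = 1 for all x ∈ G̃^χ, then |Γ'(y)| = 1 for all y ∈ G̃^{χ_m}. -/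

import Mathlib

/-- The `χ`-double cover `G̃^χ = {(g,z) ∈ G × ℂˣ : χ(g) = z²}` as a subgroup of `G × ℂˣ`. -/
def doubleCover {G : Type*} [Group G] (χ : G →* ℂˣ) : Subgroup (G × ℂˣ) where
  carrier := {p : G × ℂˣ | χ p.1 = p.2 ^ 2}
  one_mem' := by simp
  mul_mem' := by
    intro a b ha hb
    simp only [Set.mem_setOf_eq, Prod.fst_mul, Prod.snd_mul, map_mul, mul_pow] at *
    rw [ha, hb]
  inv_mem' := by
    intro a ha
    simp only [Set.mem_setOf_eq, Prod.fst_inv, Prod.snd_inv, map_inv, inv_pow] at *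
    rw [ha]

lemma mem_doubleCover {G : Type*} [Group G] (χ : G →* ℂˣ) (p : G × ℂˣ) :
    p ∈ doubleCover χ ↔ χ p.1 = p.2 ^ 2 := Iff.rfl

lemma one_neg_one_mem_doubleCover {G : Type*} [Group G] (χ : G →* ℂˣ) :
    ((1 : G), (-1 : ℂˣ)) ∈ doubleCover χ := by
  rw [mem_doubleCover]
  simp

section Aux

/-- A square root on `ℂˣ`. -/
noncomputable def usqrt (u : ℂˣ) : ℂˣ :=
  Units.mk0 ((u : ℂ) ^ ((2 : ℕ)⁻¹ : ℂ)) (by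
    intro h
    have h2 : (((u : ℂ) ^ ((2 : ℕ)⁻¹ : ℂ)) ^ (2 : ℕ)) = (u : ℂ) :=
      Complex.cpow_nat_inv_pow _ two_ne_zero
    rw [h] at h2
    simp at h2
    exact u.ne_zero h2.symm)

lemma usqrt_sq (u : ℂˣ) : (usqrt u) ^ 2 = u := by
  ext
  push_cast [usqrt]
  exact Complex.cpow_nat_inv_pow _ two_ne_zero

variable {G : Type*} [Group G] {χm χp : G →* ℂˣ}
variable (Γ : (doubleCover (χm * χp)) →* ℂˣ)

lemma gamma_neg (hΓ : Γ ⟨((1 : G), (-1 : ℂˣ)), one_neg_one_mem_doubleCover (χm * χp)⟩ = -1)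
    (g : G) (z₁ : ℂˣ) (h₁ : (g, z₁) ∈ doubleCover (χm * χp))
    (h₁' : (g, -z₁) ∈ doubleCover (χm * χp)) :
    Γ ⟨(g, -z₁), h₁'⟩ = - Γ ⟨(g, z₁), h₁⟩ := by
  have key : (⟨(g, -z₁), h₁'⟩ : doubleCover (χm * χp))
      = ⟨(g, z₁), h₁⟩ * ⟨((1 : G), (-1 : ℂˣ)), one_neg_one_mem_doubleCover (χm * χp)⟩ := by
    apply Subtype.ext
    simp [Prod.ext_iff]
  rw [key, map_mul, hΓ, mul_neg_one]

/-- Independence of the choice of square root. -/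
lemma indep (hΓ : Γ ⟨((1 : G), (-1 : ℂˣ)), one_neg_one_mem_doubleCover (χm * χp)⟩ = -1)
    (g : G) (z z₁ z₁' : ℂˣ)
    (h₁ : (g, z₁) ∈ doubleCover (χm * χp)) (h₁' : (g, z₁') ∈ doubleCover (χm * χp)) :
    ((z : ℂ) * (z₁ : ℂ)⁻¹ / ‖(z : ℂ) * (z₁ : ℂ)⁻¹‖) * (Γ ⟨(g, z₁), h₁⟩ : ℂ)
      = ((z : ℂ) * (z₁' : ℂ)⁻¹ / ‖(z : ℂ) * (z₁' : ℂ)⁻¹‖) *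
          (Γ ⟨(g, z₁'), h₁'⟩ : ℂ) := by
  have hsq : z₁' ^ 2 = z₁ ^ 2 :=
    (((mem_doubleCover _ _).1 h₁').symm).trans ((mem_doubleCover _ _).1 h₁)
  rcases Units.sq_eq_sq_iff_eq_or_eq_neg.1 hsq with h | h
  · subst h; rfl
  · subst h
    rw [gamma_neg Γ hΓ g z₁ ((mem_doubleCover _ _).2
      (((mem_doubleCover _ _).1 h₁').trans (by rw [neg_sq]))) h₁']
    have : ((z : ℂ) * ((-z₁ : ℂˣ) : ℂ)⁻¹) = -((z : ℂ) * (z₁ : ℂ)⁻¹) := by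
      push_cast; field_simp
    rw [this]
    simp only [norm_neg]
    push_cast
    ring

/-- The factor is a fourth root of unity. -/
lemma fourth_root (hreal : ∀ g : G, ((χp g : ℂ)).im = 0)
    (g : G) (z z₁ : ℂˣ)
    (hz : (g, z) ∈ doubleCover χm) (h₁ : (g, z₁) ∈ doubleCover (χm * χp)) :
    ((z : ℂ) * (z₁ : ℂ)⁻¹ / ‖(z : ℂ) * (z₁ : ℂ)⁻¹‖) ^ 4 = 1 := by
  rw [mem_doubleCover] at hz h₁
  set w : ℂ := (z : ℂ) * (z₁ : ℂ)⁻¹ with hw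
  have hzne : (z : ℂ) ≠ 0 := z.ne_zero
  have hz1ne : (z₁ : ℂ) ≠ 0 := z₁.ne_zero
  have hwne : w ≠ 0 := mul_ne_zero hzne (inv_ne_zero hz1ne)
  have hz2 : (χm g : ℂ) = (z : ℂ) ^ 2 := by rw [hz]; push_cast; ring
  have hz12 : (χm g : ℂ) * (χp g : ℂ) = (z₁ : ℂ) ^ 2 := by
    have := congrArg (Units.val) h₁
    simp only [MonoidHom.mul_apply, Units.val_mul, Units.val_pow_eq_pow_val] at this
    exact this
  -- w^2 = (χp g)⁻¹, a real number
  have hw2 : w ^ 2 = ((χp g : ℂ))⁻¹ := by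
    have hχm : (χm g : ℂ) ≠ 0 := (χm g).ne_zero
    rw [hw, mul_pow, inv_pow, ← hz2, ← hz12, mul_inv, ← mul_assoc,
      mul_inv_cancel₀ hχm, one_mul]
  set r : ℝ := ((χp g : ℂ))⁻¹.re with hr
  have him : ((χp g : ℂ))⁻¹.im = 0 := by
    rw [Complex.inv_im, hreal g]; simp
  have hw2r : w ^ 2 = (r : ℂ) := by
    rw [hw2, Complex.ext_iff]
    constructor <;> simp [hr, him]
  have hrne : r ≠ 0 := by
    intro h
    apply hwne
    have : w ^ 2 = 0 := by rw [hw2r, h]; simp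
    exact pow_eq_zero_iff two_ne_zero |>.1 this
  have habs : (‖w‖ : ℂ) ^ 4 = (r : ℂ) ^ 2 := by
    have : ‖w‖ ^ 4 = ‖w ^ 4‖ := by rw [norm_pow]
    have h4 : w ^ 4 = ((r ^ 2 : ℝ) : ℂ) := by
      push_cast; rw [show w ^ 4 = (w ^ 2) ^ 2 by ring, hw2r]
    rw [show ((‖w‖ : ℂ)) ^ 4 = ((‖w‖ ^ 4 : ℝ) : ℂ) by push_cast; ring,
      this, h4, Complex.norm_real, Real.norm_eq_abs, abs_of_nonneg (sq_nonneg r)]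
    push_cast; ring
  have habsne : (‖w‖ : ℂ) ≠ 0 :=
    Complex.ofReal_ne_zero.2 (norm_ne_zero_iff.2 hwne)
  rw [div_pow, habs, show w ^ 4 = (w ^ 2) ^ 2 by ring, hw2r]
  exact div_self (pow_ne_zero 2 (Complex.ofReal_ne_zero.2 hrne))

end Aux

section Construct

variable {G : Type*} [Group G] {χm χp : G →* ℂˣ}

/-- The unit-circle part of a unit. -/
noncomputable def sgnu (w : ℂˣ) : ℂˣ :=
  Units.mk0 ((w : ℂ) / ‖(w : ℂ)‖)
    (div_ne_zero w.ne_zero (Complex.ofReal_ne_zero.2 (norm_ne_zero_iff.2 w.ne_zero)))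

lemma memlift (χm χp : G →* ℂˣ) (p : G × ℂˣ) (hp : p ∈ doubleCover χm) :
    (p.1, p.2 * usqrt (χp p.1)) ∈ doubleCover (χm * χp) := by
  rw [mem_doubleCover] at hp ⊢
  rw [MonoidHom.mul_apply, hp, mul_pow, usqrt_sq]

variable (Γ : (doubleCover (χm * χp)) →* ℂˣ)

/-- The raw transferred function. -/
noncomputable def rawΓ' (p : doubleCover χm) : ℂˣ :=
  sgnu ((usqrt (χp p.1.1))⁻¹) *
    Γ ⟨(p.1.1, p.1.2 * usqrt (χp p.1.1)), memlift χm χp p.1 p.2⟩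

lemma master (hΓ : Γ ⟨((1 : G), (-1 : ℂˣ)), one_neg_one_mem_doubleCover (χm * χp)⟩ = -1)
    (g : G) (z z₁ : ℂˣ) (hz : (g, z) ∈ doubleCover χm)
    (h₁ : (g, z₁) ∈ doubleCover (χm * χp)) :
    (rawΓ' Γ ⟨(g, z), hz⟩ : ℂ)
      = ((z : ℂ) * (z₁ : ℂ)⁻¹ / ‖(z : ℂ) * (z₁ : ℂ)⁻¹‖) *
          (Γ ⟨(g, z₁), h₁⟩ : ℂ) := by
  have key := indep Γ hΓ g z z₁ (z * usqrt (χp g)) h₁ (memlift χm χp (g, z) hz)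
  rw [key]
  have hs : ((z : ℂ) * ((z * usqrt (χp g) : ℂˣ) : ℂ)⁻¹)
      = (((usqrt (χp g))⁻¹ : ℂˣ) : ℂ) := by
    push_cast
    field_simp
  rw [rawΓ', Units.val_mul]
  congr 1
  rw [hs, sgnu, Units.val_mk0]

lemma rawΓ'_mul (hΓ : Γ ⟨((1 : G), (-1 : ℂˣ)), one_neg_one_mem_doubleCover (χm * χp)⟩ = -1)
    (p q : doubleCover χm) : rawΓ' Γ (p * q) = rawΓ' Γ p * rawΓ' Γ q := by
  obtain ⟨⟨g, z⟩, hp⟩ := p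
  obtain ⟨⟨h, u⟩, hq⟩ := q
  have hzs := memlift χm χp (g, z) hp
  have hus := memlift χm χp (h, u) hq
  have hprod : (g * h, (z * usqrt (χp g)) * (u * usqrt (χp h))) ∈ doubleCover (χm * χp) :=
    (doubleCover (χm * χp)).mul_mem hzs hus
  apply Units.ext
  push_cast
  have h1 : ((⟨(g, z), hp⟩ : doubleCover χm) * ⟨(h, u), hq⟩ : doubleCover χm)
      = ⟨(g * h, z * u), (doubleCover χm).mul_mem hp hq⟩ := rfl
  rw [h1, master Γ hΓ (g * h) (z * u) ((z * usqrt (χp g)) * (u * usqrt (χp h)))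
      ((doubleCover χm).mul_mem hp hq) hprod,
    master Γ hΓ g z (z * usqrt (χp g)) hp hzs,
    master Γ hΓ h u (u * usqrt (χp h)) hq hus]
  have hΓmul : (Γ ⟨(g * h, (z * usqrt (χp g)) * (u * usqrt (χp h))), hprod⟩ : ℂ)
      = (Γ ⟨(g, z * usqrt (χp g)), hzs⟩ : ℂ) * (Γ ⟨(h, u * usqrt (χp h)), hus⟩ : ℂ) := by
    rw [show (⟨(g * h, (z * usqrt (χp g)) * (u * usqrt (χp h))), hprod⟩ :
        doubleCover (χm * χp))
      = ⟨(g, z * usqrt (χp g)), hzs⟩ * ⟨(h, u * usqrt (χp h)), hus⟩ from rfl, map_mul]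
    push_cast
    ring
  rw [hΓmul]
  set a : ℂ := (z : ℂ) * ((z * usqrt (χp g) : ℂˣ) : ℂ)⁻¹ with ha
  set b : ℂ := (u : ℂ) * ((u * usqrt (χp h) : ℂˣ) : ℂ)⁻¹ with hb
  have hab : ((z * u : ℂˣ) : ℂ) * (((z * usqrt (χp g)) * (u * usqrt (χp h)) : ℂˣ) : ℂ)⁻¹
      = a * b := by
    rw [ha, hb]
    push_cast
    field_simp
  rw [hab, norm_mul]
  have hane : a ≠ 0 := by
    rw [ha]; exact mul_ne_zero z.ne_zero (inv_ne_zero (Units.ne_zero _))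
  have hbne : b ≠ 0 := by
    rw [hb]; exact mul_ne_zero u.ne_zero (inv_ne_zero (Units.ne_zero _))
  push_cast
  ring

end Construct

/-- Transfer of a genuine character from the `χ_m·χ_p`-double cover to the
`χ_m`-double cover, where `χ_p` is real-valued: the defining expression is independent of the
choice of square root `z₁`, defines a genuine homomorphism `Γ'` on `G̃^{χ_m}`, the
correction factor is a fourth root of unity, and unitarity is preserved. -/
theorem statement_4 {G : Type*} [Group G] (χm χp : G →* ℂˣ)
    (hreal : ∀ g : G, ((χp g : ℂ)).im = 0)
    (Γ : (doubleCover (χm * χp)) →* ℂˣ)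
    (hΓ : Γ ⟨((1 : G), (-1 : ℂˣ)), one_neg_one_mem_doubleCover (χm * χp)⟩ = -1) :
    -- (i) independence of the choice of z₁
    (∀ (g : G) (z z₁ z₁' : ℂˣ),
      (g, z) ∈ doubleCover χm →
      ∀ (h₁ : (g, z₁) ∈ doubleCover (χm * χp)) (h₁' : (g, z₁') ∈ doubleCover (χm * χp)),
        ((z : ℂ) * (z₁ : ℂ)⁻¹ / ‖(z : ℂ) * (z₁ : ℂ)⁻¹‖) * (Γ ⟨(g, z₁), h₁⟩ : ℂ)
          = ((z : ℂ) * (z₁' : ℂ)⁻¹ / ‖(z : ℂ) * (z₁' : ℂ)⁻¹‖) *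
              (Γ ⟨(g, z₁'), h₁'⟩ : ℂ)) ∧
    -- (ii) and (iv): Γ' is a genuine homomorphism, unitary if Γ is
    (∃ Γ' : (doubleCover χm) →* ℂˣ,
      (∀ (g : G) (z z₁ : ℂˣ) (hz : (g, z) ∈ doubleCover χm)
          (h₁ : (g, z₁) ∈ doubleCover (χm * χp)),
        (Γ' ⟨(g, z), hz⟩ : ℂ)
          = ((z : ℂ) * (z₁ : ℂ)⁻¹ / ‖(z : ℂ) * (z₁ : ℂ)⁻¹‖) *
              (Γ ⟨(g, z₁), h₁⟩ : ℂ)) ∧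
      Γ' ⟨((1 : G), (-1 : ℂˣ)), one_neg_one_mem_doubleCover χm⟩ = -1 ∧
      ((∀ x : doubleCover (χm * χp), ‖(Γ x : ℂ)‖ = 1) →
        ∀ y : doubleCover χm, ‖(Γ' y : ℂ)‖ = 1)) ∧
    -- (iii) the correction factor is a fourth root of unity
    (∀ (g : G) (z z₁ : ℂˣ),
      (g, z) ∈ doubleCover χm → (g, z₁) ∈ doubleCover (χm * χp) →
      ((z : ℂ) * (z₁ : ℂ)⁻¹ / ‖(z : ℂ) * (z₁ : ℂ)⁻¹‖) ^ 4 = 1) := by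
  refine ⟨fun g z z₁ z₁' _ h₁ h₁' => indep Γ hΓ g z z₁ z₁' h₁ h₁', ?_,
    fun g z z₁ hz h₁ => fourth_root hreal g z z₁ hz h₁⟩
  refine ⟨MonoidHom.mk' (rawΓ' Γ) (rawΓ'_mul Γ hΓ), ?_, ?_, ?_⟩
  · intro g z z₁ hz h₁
    exact master Γ hΓ g z z₁ hz h₁
  · apply Units.ext
    have hm := master Γ hΓ 1 (-1) (-1) (one_neg_one_mem_doubleCover χm)
      (one_neg_one_mem_doubleCover (χm * χp))
    rw [show ((MonoidHom.mk' (rawΓ' Γ) (rawΓ'_mul Γ hΓ))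
        ⟨((1 : G), (-1 : ℂˣ)), one_neg_one_mem_doubleCover χm⟩ : ℂ)
      = (rawΓ' Γ ⟨((1 : G), (-1 : ℂˣ)), one_neg_one_mem_doubleCover χm⟩ : ℂ) from rfl,
      hm, hΓ]
    norm_num
  · intro hunit y
    obtain ⟨⟨g, z⟩, hy⟩ := y
    have hm := master Γ hΓ g z (z * usqrt (χp g)) hy (memlift χm χp (g, z) hy)
    rw [show ((MonoidHom.mk' (rawΓ' Γ) (rawΓ'_mul Γ hΓ)) ⟨(g, z), hy⟩ : ℂ)
      = (rawΓ' Γ ⟨(g, z), hy⟩ : ℂ) from rfl, hm]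
    set w : ℂ := (z : ℂ) * ((z * usqrt (χp g) : ℂˣ) : ℂ)⁻¹ with hw
    have hwne : w ≠ 0 := mul_ne_zero z.ne_zero (inv_ne_zero (Units.ne_zero _))
    rw [norm_mul, hunit, norm_div, Complex.norm_real, norm_norm,
      div_self (norm_ne_zero_iff.2 hwne), one_mul]
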